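/- Let L be a factorial language over a finite alphabet such that L_n is nonempty for every n. Then lim_{n→∞} r(n)/p(n) = 1 if and only if L is almost prolongable and lim_{n→∞} p(n+1)/p(n) = 1. (This is the combinatorial heart of Theorem 1.1, identifying the complexity condition (5) with the local condition that almost every word of length n prolongs uniquely on both sides.) -/

import Mathlib

open Filter Topology

variable {A : Type*}

/-- The set of words of `L` of length `n`. -/
def Ln (L : Set (List A)) (n : ℕ) : Set (List A) := {w | w ∈ L ∧ w.length = n}

/-- The complexity function `p n = |L_n|`. -/
noncomputable def cplx (L : Set (List A)) (n : ℕ) : ℕ := Nat.card (Ln L n)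

/-- A language is factorial if it is closed under taking contiguous subwords. -/
def IsFactorial (L : Set (List A)) : Prop := ∀ u v : List A, u ∈ L → v <:+: u → v ∈ L

/-- `w` is left-prolongable in `L`. -/
def LeftProlongable (L : Set (List A)) (w : List A) : Prop := ∃ a : A, (a :: w) ∈ L

/-- `w` is right-prolongable in `L`. -/
def RightProlongable (L : Set (List A)) (w : List A) : Prop := ∃ b : A, (w ++ [b]) ∈ L

/-- `e_l(n)`: the number of words of length `n` in `L` that are not left-prolongable. -/
noncomputable def eL (L : Set (List A)) (n : ℕ) : ℕ :=
  Nat.card {w : List A | w ∈ Ln L n ∧ ¬ LeftProlongable L w}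

/-- `e_r(n)`: the number of words of length `n` in `L` that are not right-prolongable. -/
noncomputable def eR (L : Set (List A)) (n : ℕ) : ℕ :=
  Nat.card {w : List A | w ∈ Ln L n ∧ ¬ RightProlongable L w}

/-- `L` is almost prolongable: `e_l(n)/p(n) → 0` and `e_r(n)/p(n) → 0`. -/
def AlmostProlongable (L : Set (List A)) : Prop :=
  Tendsto (fun n => (eL L n : ℝ) / (cplx L n : ℝ)) atTop (𝓝 0) ∧
  Tendsto (fun n => (eR L n : ℝ) / (cplx L n : ℝ)) atTop (𝓝 0)

/-- `r(n)`: words of length `n` having exactly one left and exactly one right prolongation. -/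
noncomputable def rBoth (L : Set (List A)) (n : ℕ) : ℕ :=
  Nat.card {w : List A | w ∈ Ln L n ∧ (∃! a : A, (a :: w) ∈ L) ∧ (∃! b : A, (w ++ [b]) ∈ L)}

set_option linter.unusedSectionVars false

section Core
open scoped Classical
variable [Fintype A] (L : Set (List A))

lemma finite_Ln (n : ℕ) : (Ln L n).Finite :=
  (List.finite_length_eq A n).subset fun _ h => h.2

/-- Finset of words of length n. -/
noncomputable def pF (n : ℕ) : Finset (List A) := (finite_Ln L n).toFinset

lemma mem_pF {n : ℕ} {w : List A} : w ∈ pF L n ↔ w ∈ L ∧ w.length = n := by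
  simp [pF, Ln, Set.Finite.mem_toFinset]

lemma cplx_eq (n : ℕ) : cplx L n = (pF L n).card := by
  rw [cplx, Nat.card_coe_set_eq, Set.ncard_eq_toFinset_card _ (finite_Ln L n)]
  rfl

noncomputable def lcnt (w : List A) : ℕ := Nat.card {a : A | (a :: w) ∈ L}
noncomputable def rcnt (w : List A) : ℕ := Nat.card {b : A | (w ++ [b]) ∈ L}

lemma lcnt_eq_filter (w : List A) :
    lcnt L w = (Finset.univ.filter fun a : A => (a :: w) ∈ L).card := by
  rw [lcnt, Nat.card_coe_set_eq, Set.ncard_eq_toFinset_card _ (Set.toFinite _)]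
  congr 1
  ext a
  simp [Set.Finite.mem_toFinset]

lemma lcnt_le (w : List A) : lcnt L w ≤ Fintype.card A := by
  rw [lcnt_eq_filter]; exact le_trans (Finset.card_filter_le _ _) (le_of_eq (by simp))

lemma lcnt_pos_iff (w : List A) : lcnt L w ≠ 0 ↔ LeftProlongable L w := by
  rw [lcnt_eq_filter]
  simp [Finset.card_ne_zero, ← Finset.nonempty_iff_ne_empty, Finset.filter_nonempty_iff, LeftProlongable]

lemma lcnt_eq_one_iff (w : List A) : lcnt L w = 1 ↔ ∃! a : A, (a :: w) ∈ L := by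
  rw [lcnt, Nat.card_eq_one_iff_exists]
  constructor
  · rintro ⟨⟨a, ha⟩, h⟩
    exact ⟨a, ha, fun b hb => congrArg Subtype.val (h ⟨b, hb⟩)⟩
  · rintro ⟨a, ha, h⟩
    exact ⟨⟨a, ha⟩, fun ⟨b, hb⟩ => Subtype.ext (h b hb)⟩

lemma sum_lcnt (hfac : IsFactorial L) (n : ℕ) :
    cplx L (n + 1) = ∑ w ∈ pF L n, lcnt L w := by
  rw [cplx_eq]
  rw [Finset.card_eq_sum_card_fiberwise (f := List.tail) (t := pF L n)
    (fun u hu => by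
      rw [Finset.mem_coe, mem_pF] at hu ⊢
      refine ⟨hfac u u.tail hu.1 (List.tail_suffix u).isInfix, ?_⟩
      rw [List.length_tail, hu.2]; rfl)]
  refine Finset.sum_congr rfl fun w hw => ?_
  rw [lcnt_eq_filter]
  have hwmem := (mem_pF L).mp hw
  refine Finset.card_bij' (fun u hu => u.head ?_) (fun a _ => a :: w) ?_ ?_ ?_ ?_
  · rintro rfl
    have := (Finset.mem_filter.mp hu).1
    rw [mem_pF] at this
    simp at this
  · intro u hu
    have h1 := Finset.mem_filter.mp hu
    have h2 := (mem_pF L).mp h1.1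
    have hne : u ≠ [] := by rintro rfl; simp at h2
    simp only [Finset.mem_filter, Finset.mem_univ, true_and]
    rw [show u.head hne :: w = u by rw [← h1.2]; exact List.cons_head_tail hne]
    exact h2.1
  · intro a ha
    simp only [Finset.mem_filter, Finset.mem_univ, true_and] at ha
    refine Finset.mem_filter.mpr ⟨(mem_pF L).mpr ⟨ha, by simp [hwmem.2]⟩, by simp⟩
  · intro u hu
    have h1 := (Finset.mem_filter.mp hu).2
    subst h1
    exact List.cons_head_tail _
  · intro a ha
    simp

/-- Generic: Nat.card of a subtype is 1 iff ∃!. -/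
lemma natCard_one_iff {P : A → Prop} : Nat.card {a : A | P a} = 1 ↔ ∃! a : A, P a := by
  rw [Nat.card_eq_one_iff_exists]
  constructor
  · rintro ⟨⟨a, ha⟩, h⟩
    exact ⟨a, ha, fun b hb => congrArg Subtype.val (h ⟨b, hb⟩)⟩
  · rintro ⟨a, ha, h⟩
    exact ⟨⟨a, ha⟩, fun b => Subtype.ext (h b.1 b.2)⟩

lemma rcnt_eq_one_iff (w : List A) : rcnt L w = 1 ↔ ∃! b : A, (w ++ [b]) ∈ L :=
  natCard_one_iff

lemma rcnt_pos_iff (w : List A) : rcnt L w ≠ 0 ↔ RightProlongable L w := by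
  rw [rcnt, Nat.card_ne_zero]
  constructor
  · rintro ⟨⟨b, hb⟩, _⟩; exact ⟨b, hb⟩
  · rintro ⟨b, hb⟩; exact ⟨⟨⟨b, hb⟩⟩, Subtype.finite⟩

/-- The reversed language. -/
def revL (L : Set (List A)) : Set (List A) := {w | w.reverse ∈ L}

lemma revL_factorial (hfac : IsFactorial L) : IsFactorial (revL L) := by
  intro u v hu hv
  exact hfac u.reverse v.reverse hu hv.reverse

lemma Ln_revL (n : ℕ) : Ln (revL L) n = List.reverse '' Ln L n := by
  ext w
  constructor
  · rintro ⟨hw, hlen⟩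
    exact ⟨w.reverse, ⟨hw, by simpa using hlen⟩, by simp⟩
  · rintro ⟨v, ⟨hv, hlen⟩, rfl⟩
    exact ⟨by simpa [revL] using hv, by simpa using hlen⟩

lemma cplx_revL (n : ℕ) : cplx (revL L) n = cplx L n := by
  rw [cplx, cplx, Ln_revL, Nat.card_coe_set_eq, Nat.card_coe_set_eq,
    Set.ncard_image_of_injective _ List.reverse_injective]

lemma pF_revL (n : ℕ) : pF (revL L) n = (pF L n).image List.reverse := by
  ext w
  simp only [mem_pF, Finset.mem_image]
  constructor
  · rintro ⟨hw, hlen⟩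
    exact ⟨w.reverse, ⟨by simpa [revL] using hw, by simpa using hlen⟩, by simp⟩
  · rintro ⟨v, hv, rfl⟩
    exact ⟨by simpa [revL] using hv.1, by simpa using hv.2⟩

lemma lcnt_revL (w : List A) : lcnt (revL L) w.reverse = rcnt L w := by
  have h : {a : A | a :: w.reverse ∈ revL L} = {b : A | w ++ [b] ∈ L} := by
    ext a; simp [revL]
  rw [lcnt, rcnt, h]

lemma sum_rcnt (hfac : IsFactorial L) (n : ℕ) :
    cplx L (n + 1) = ∑ w ∈ pF L n, rcnt L w := by
  rw [← cplx_revL L (n + 1), sum_lcnt _ (revL_factorial L hfac), pF_revL,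
    Finset.sum_image (fun x _ y _ h => List.reverse_injective h)]
  exact Finset.sum_congr rfl fun w _ => lcnt_revL L w

lemma eL_eq (n : ℕ) :
    eL L n = ((pF L n).filter fun w => lcnt L w = 0).card := by
  rw [eL, Nat.card_coe_set_eq,
    Set.ncard_eq_toFinset_card _ ((finite_Ln L n).subset fun w hw => hw.1)]
  congr 1
  ext w
  simp only [Set.Finite.mem_toFinset, Set.mem_setOf_eq, Finset.mem_filter, mem_pF]
  rw [← lcnt_pos_iff, not_not]
  simp only [Ln, Set.mem_setOf_eq]

lemma eR_eq (n : ℕ) :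
    eR L n = ((pF L n).filter fun w => rcnt L w = 0).card := by
  rw [eR, Nat.card_coe_set_eq,
    Set.ncard_eq_toFinset_card _ ((finite_Ln L n).subset fun w hw => hw.1)]
  congr 1
  ext w
  simp only [Set.Finite.mem_toFinset, Set.mem_setOf_eq, Finset.mem_filter, mem_pF]
  rw [← rcnt_pos_iff, not_not]
  simp only [Ln, Set.mem_setOf_eq]

lemma rBoth_eq (n : ℕ) :
    rBoth L n = ((pF L n).filter fun w => lcnt L w = 1 ∧ rcnt L w = 1).card := by
  rw [rBoth, Nat.card_coe_set_eq,
    Set.ncard_eq_toFinset_card _ ((finite_Ln L n).subset fun w hw => hw.1)]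
  congr 1
  ext w
  simp only [Set.Finite.mem_toFinset, Set.mem_setOf_eq, Finset.mem_filter, mem_pF]
  rw [lcnt_eq_one_iff, rcnt_eq_one_iff]
  simp only [Ln, Set.mem_setOf_eq]

lemma cplx_pos (hne : ∀ n : ℕ, (Ln L n).Nonempty) (n : ℕ) : 0 < cplx L n := by
  rw [cplx_eq]
  exact Finset.card_pos.mpr (by obtain ⟨w, hw⟩ := hne n; exact ⟨w, (mem_pF L).mpr hw⟩)

lemma key1 (hfac : IsFactorial L) (n : ℕ) :
    3 * cplx L n ≤ rBoth L n + 2 * cplx L (n + 1) + 2 * eL L n + 2 * eR L n := by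
  classical
  have h1 := sum_lcnt L hfac n
  have h2 := sum_rcnt L hfac n
  rw [rBoth_eq, eL_eq, eR_eq, Finset.card_filter, Finset.card_filter, Finset.card_filter,
    cplx_eq L n]
  calc 3 * (pF L n).card = ∑ w ∈ pF L n, 3 := by rw [Finset.sum_const]; ring
    _ ≤ ∑ w ∈ pF L n, ((if lcnt L w = 1 ∧ rcnt L w = 1 then 1 else 0)
          + (lcnt L w + rcnt L w)
          + 2 * (if lcnt L w = 0 then 1 else 0) + 2 * (if rcnt L w = 0 then 1 else 0)) := by
        refine Finset.sum_le_sum fun w _ => ?_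
        split_ifs <;> omega
    _ = _ := by
        have h3 : 2 * cplx L (n + 1) = ∑ w ∈ pF L n, lcnt L w + ∑ w ∈ pF L n, rcnt L w := by
          omega
        rw [h3]
        simp only [Finset.sum_add_distrib, Finset.mul_sum]

lemma key2 (hfac : IsFactorial L) (n : ℕ) :
    cplx L (n + 1) + (Fintype.card A - 1) * rBoth L n ≤ Fintype.card A * cplx L n := by
  classical
  rw [sum_lcnt L hfac n, rBoth_eq, Finset.card_filter, cplx_eq L n]
  calc ∑ w ∈ pF L n, lcnt L w
        + (Fintype.card A - 1) * ∑ w ∈ pF L n, (if lcnt L w = 1 ∧ rcnt L w = 1 then 1 else 0)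
      = ∑ w ∈ pF L n, (lcnt L w
          + (Fintype.card A - 1) * (if lcnt L w = 1 ∧ rcnt L w = 1 then 1 else 0)) := by
        simp only [Finset.sum_add_distrib, Finset.mul_sum]
    _ ≤ ∑ w ∈ pF L n, Fintype.card A := by
        refine Finset.sum_le_sum fun w _ => ?_
        have hb := lcnt_le L w
        split_ifs with h
        · omega
        · omega
    _ = Fintype.card A * (pF L n).card := by rw [Finset.sum_const]; ring

lemma key3 (hfac : IsFactorial L) (n : ℕ) : rBoth L n ≤ cplx L (n + 1) := by
  classical
  rw [sum_lcnt L hfac n, rBoth_eq, Finset.card_filter]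
  refine Finset.sum_le_sum fun w _ => ?_
  split_ifs with h
  · omega
  · omega

lemma key4L (n : ℕ) : rBoth L n + eL L n ≤ cplx L n := by
  classical
  rw [rBoth_eq, eL_eq, cplx_eq, Finset.card_filter, Finset.card_filter,
    ← Finset.sum_add_distrib]
  calc ∑ w ∈ pF L n, ((if lcnt L w = 1 ∧ rcnt L w = 1 then 1 else 0)
        + (if lcnt L w = 0 then 1 else 0))
      ≤ ∑ w ∈ pF L n, 1 := by
        refine Finset.sum_le_sum fun w _ => ?_
        split_ifs <;> omega
    _ = (pF L n).card := by rw [Finset.sum_const, smul_eq_mul, mul_one]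

lemma key4R (n : ℕ) : rBoth L n + eR L n ≤ cplx L n := by
  classical
  rw [rBoth_eq, eR_eq, cplx_eq, Finset.card_filter, Finset.card_filter,
    ← Finset.sum_add_distrib]
  calc ∑ w ∈ pF L n, ((if lcnt L w = 1 ∧ rcnt L w = 1 then 1 else 0)
        + (if rcnt L w = 0 then 1 else 0))
      ≤ ∑ w ∈ pF L n, 1 := by
        refine Finset.sum_le_sum fun w _ => ?_
        split_ifs <;> omega
    _ = (pF L n).card := by rw [Finset.sum_const, smul_eq_mul, mul_one]

lemma key5 (n : ℕ) : rBoth L n ≤ cplx L n := le_trans (Nat.le_add_right _ _) (key4L L n)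

end Core

lemma div_div_le {a b c : ℝ} (hc : 0 < c) (h : a ≤ b) : a / c ≤ b / c :=
  div_le_div_of_nonneg_right h hc.le

theorem rauzy_ratio_iff_almost_prolongable {A : Type*} [Fintype A]
    (L : Set (List A)) (hfac : IsFactorial L) (hne : ∀ n : ℕ, (Ln L n).Nonempty) :
    Tendsto (fun n => (rBoth L n : ℝ) / (cplx L n : ℝ)) atTop (𝓝 1) ↔
      (AlmostProlongable L ∧
        Tendsto (fun n => (cplx L (n + 1) : ℝ) / (cplx L n : ℝ)) atTop (𝓝 1)) := by
  have hp : ∀ n, (0:ℝ) < (cplx L n : ℝ) := fun n => by exact_mod_cast cplx_pos L hne n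
  have hA : Nonempty A := by
    obtain ⟨w, hw, hlen⟩ := hne 1
    cases w with
    | nil => simp at hlen
    | cons a _ => exact ⟨a⟩
  have hk : 1 ≤ Fintype.card A := Fintype.card_pos
  have hkR : ((Fintype.card A - 1 : ℕ) : ℝ) = (Fintype.card A : ℝ) - 1 := by
    rw [Nat.cast_sub hk]; simp
  have c1 : ∀ n, 3 * (cplx L n : ℝ) ≤ (rBoth L n : ℝ) + 2 * (cplx L (n+1) : ℝ)
      + 2 * (eL L n : ℝ) + 2 * (eR L n : ℝ) := fun n => by exact_mod_cast key1 L hfac n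
  have c2 : ∀ n, (cplx L (n+1) : ℝ) + ((Fintype.card A : ℝ) - 1) * (rBoth L n : ℝ)
      ≤ (Fintype.card A : ℝ) * (cplx L n : ℝ) := fun n => by
    rw [← hkR]; exact_mod_cast key2 L hfac n
  have c3 : ∀ n, (rBoth L n : ℝ) ≤ (cplx L (n+1) : ℝ) := fun n => by
    exact_mod_cast key3 L hfac n
  have c4L : ∀ n, (rBoth L n : ℝ) + (eL L n : ℝ) ≤ (cplx L n : ℝ) := fun n => by
    exact_mod_cast key4L L n
  have c4R : ∀ n, (rBoth L n : ℝ) + (eR L n : ℝ) ≤ (cplx L n : ℝ) := fun n => by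
    exact_mod_cast key4R L n
  have c5 : ∀ n, (rBoth L n : ℝ) ≤ (cplx L n : ℝ) := fun n => by exact_mod_cast key5 L n
  constructor
  · intro h
    have hup0 : Tendsto (fun n => 1 - (rBoth L n : ℝ) / (cplx L n : ℝ)) atTop (𝓝 0) := by
      have := Tendsto.sub
        (tendsto_const_nhds : Tendsto (fun _ : ℕ => (1:ℝ)) atTop (𝓝 1)) h
      rwa [sub_self] at this
    refine ⟨⟨?_, ?_⟩, ?_⟩
    · refine tendsto_of_tendsto_of_tendsto_of_le_of_le tendsto_const_nhds hup0
        (fun n => by positivity) (fun n => ?_)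
      calc (eL L n : ℝ) / (cplx L n : ℝ)
          ≤ ((cplx L n : ℝ) - (rBoth L n : ℝ)) / (cplx L n : ℝ) :=
            div_div_le (hp n) (by linarith [c4L n])
        _ = 1 - (rBoth L n : ℝ) / (cplx L n : ℝ) := by
            rw [sub_div, div_self (hp n).ne']
    · refine tendsto_of_tendsto_of_tendsto_of_le_of_le tendsto_const_nhds hup0
        (fun n => by positivity) (fun n => ?_)
      calc (eR L n : ℝ) / (cplx L n : ℝ)
          ≤ ((cplx L n : ℝ) - (rBoth L n : ℝ)) / (cplx L n : ℝ) :=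
            div_div_le (hp n) (by linarith [c4R n])
        _ = 1 - (rBoth L n : ℝ) / (cplx L n : ℝ) := by
            rw [sub_div, div_self (hp n).ne']
    · have hupT : Tendsto (fun n => (Fintype.card A : ℝ)
          - ((Fintype.card A : ℝ) - 1) * ((rBoth L n : ℝ) / (cplx L n : ℝ))) atTop
          (𝓝 ((Fintype.card A : ℝ) - ((Fintype.card A : ℝ) - 1) * 1)) :=
        tendsto_const_nhds.sub (h.const_mul _)
      rw [show (Fintype.card A : ℝ) - ((Fintype.card A : ℝ) - 1) * 1 = 1 by ring] at hupT
      refine tendsto_of_tendsto_of_tendsto_of_le_of_le h hupT (fun n => ?_) (fun n => ?_)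
      · exact div_div_le (hp n) (c3 n)
      · calc (cplx L (n+1) : ℝ) / (cplx L n : ℝ)
            ≤ ((Fintype.card A : ℝ) * (cplx L n : ℝ)
                - ((Fintype.card A : ℝ) - 1) * (rBoth L n : ℝ)) / (cplx L n : ℝ) :=
              div_div_le (hp n) (by linarith [c2 n])
          _ = (Fintype.card A : ℝ)
              - ((Fintype.card A : ℝ) - 1) * ((rBoth L n : ℝ) / (cplx L n : ℝ)) := by
            rw [sub_div, mul_div_assoc, mul_div_assoc, div_self (hp n).ne', mul_one]
  · rintro ⟨⟨heL, heR⟩, hT⟩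
    have hlowT : Tendsto (fun n => 3 - 2 * ((cplx L (n+1) : ℝ) / (cplx L n : ℝ))
        - 2 * ((eL L n : ℝ) / (cplx L n : ℝ)) - 2 * ((eR L n : ℝ) / (cplx L n : ℝ))) atTop
        (𝓝 (3 - 2 * 1 - 2 * 0 - 2 * 0)) :=
      ((tendsto_const_nhds.sub (hT.const_mul 2)).sub (heL.const_mul 2)).sub (heR.const_mul 2)
    rw [show (3:ℝ) - 2 * 1 - 2 * 0 - 2 * 0 = 1 by ring] at hlowT
    refine tendsto_of_tendsto_of_tendsto_of_le_of_le hlowT tendsto_const_nhds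
      (fun n => ?_) (fun n => (div_le_one (hp n)).mpr (c5 n))
    calc 3 - 2 * ((cplx L (n+1) : ℝ) / (cplx L n : ℝ))
        - 2 * ((eL L n : ℝ) / (cplx L n : ℝ)) - 2 * ((eR L n : ℝ) / (cplx L n : ℝ))
        = (3 * (cplx L n : ℝ) - 2 * (cplx L (n+1) : ℝ) - 2 * (eL L n : ℝ)
            - 2 * (eR L n : ℝ)) / (cplx L n : ℝ) := by
          rw [sub_div, sub_div, sub_div, mul_div_assoc, mul_div_assoc, mul_div_assoc,
            mul_div_assoc, div_self (hp n).ne', mul_one]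
      _ ≤ (rBoth L n : ℝ) / (cplx L n : ℝ) := div_div_le (hp n) (by linarith [c1 n])
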